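/- Let a : H × H → ℝ be a symmetric positive semidefinite bilinear form, let u_{ij} ∈ H satisfy a(u_{ij}, u_{ji}) = a(u_{ii}, u_{jj}) for all i,j ∈ {1,2,3}, and let μ₀ > 0, λ₀ + μ₀ ≥ 0. Then λ₀ · a(Σ_j u_{jj}, Σ_j u_{jj}) + (μ₀/2) Σ_{i,j} a(u_{ij} + u_{ji}, u_{ij} + u_{ji}) ≥ μ₀ Σ_{i,j} a(u_{ij}, u_{ij}). -/
import Mathlib


theorem lame_form_coercivity {H : Type*} [AddCommGroup H] [Module ℝ H]
    (a : H →ₗ[ℝ] H →ₗ[ℝ] ℝ) (hsymm : ∀ x y, a x y = a y x)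
    (hpsd : ∀ x, 0 ≤ a x x)
    (u : Fin 3 → Fin 3 → H)
    (hex : ∀ i j, a (u i j) (u j i) = a (u i i) (u j j))
    (lam0 mu0 : ℝ) (hmu0 : 0 < mu0) (hlm : 0 ≤ lam0 + mu0) :
    mu0 * ∑ i, ∑ j, a (u i j) (u i j)
      ≤ lam0 * a (∑ j, u j j) (∑ j, u j j)
        + (mu0 / 2) * ∑ i, ∑ j, a (u i j + u j i) (u i j + u j i) := by
  set T : H := ∑ j, u j j with hT
  have hTT : (∑ i, ∑ j, a (u i i) (u j j)) = a T T := by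
    simp_rw [hT, map_sum, LinearMap.sum_apply]
    exact Finset.sum_comm
  have hexp : ∀ i j, a (u i j + u j i) (u i j + u j i)
      = a (u i j) (u i j) + a (u j i) (u j i) + 2 * a (u i i) (u j j) := by
    intro i j
    have h1 : a (u i j) (u j i) = a (u i i) (u j j) := hex i j
    have h2 : a (u j i) (u i j) = a (u i i) (u j j) := by
      rw [hsymm]; exact h1
    simp [map_add, h1, h2]
    ring
  have hsum : (∑ i, ∑ j, a (u i j + u j i) (u i j + u j i))
      = 2 * (∑ i, ∑ j, a (u i j) (u i j)) + 2 * a T T := by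
    calc (∑ i, ∑ j, a (u i j + u j i) (u i j + u j i))
        = ∑ i, ∑ j, (a (u i j) (u i j) + a (u j i) (u j i) + 2 * a (u i i) (u j j)) := by
          simp_rw [hexp]
      _ = (∑ i, ∑ j, a (u i j) (u i j)) + (∑ i, ∑ j, a (u j i) (u j i))
            + 2 * ∑ i, ∑ j, a (u i i) (u j j) := by
          simp [Finset.sum_add_distrib, Finset.mul_sum]
      _ = 2 * (∑ i, ∑ j, a (u i j) (u i j)) + 2 * a T T := by
          rw [hTT, Finset.sum_comm]; ring
  rw [hsum]
  nlinarith [hpsd T, hmu0.le]
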